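/- Let q be a prime power and E ⊆ 𝔽_q². Let L²(D_E) denote the number of quadruples (u,v,x,y) ∈ E⁴ with u ≠ v, x ≠ y, such that u − v = λ(x − y) for some λ ∈ 𝔽_q \ {0}. Then |L²(D_E) − |E|⁴/q| ≤ C q²|E|² for an absolute constant C. -/

import Mathlib

open scoped Classical
open Finset

namespace Stmt7Aux

variable {Fq : Type} [Field Fq] [Fintype Fq]

noncomputable def ψ (Fq : Type) [Field Fq] [Fintype Fq] : AddChar Fq ℂ :=
  AddChar.FiniteField.primitiveChar_to_Complex Fq

lemma ψ_prim : (ψ Fq).IsPrimitive := AddChar.FiniteField.primitiveChar_to_Complex_isPrimitive Fq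

lemma ψ_conj (x : Fq) : (starRingEnd ℂ) (ψ Fq x) = ψ Fq (-x) := by
  have h : 0 < ringChar Fq := Nat.pos_of_ne_zero (CharP.ringChar_ne_zero_of_finite Fq)
  rw [AddChar.starComp_apply h, AddChar.inv_apply]

def dot (m a : Fin 2 → Fq) : Fq := m 0 * a 0 + m 1 * a 1

lemma orth (a : Fin 2 → Fq) :
    ∑ m : Fin 2 → Fq, ψ Fq (dot m a) =
      if a = 0 then ((Fintype.card Fq : ℂ)) ^ 2 else 0 := by
  have h1 : ∑ m : Fin 2 → Fq, ψ Fq (dot m a)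
      = ∑ p : Fq × Fq, ψ Fq (p.1 * a 0) * ψ Fq (p.2 * a 1) := by
    apply Fintype.sum_equiv (finTwoArrowEquiv Fq)
    intro m
    rw [dot, AddChar.map_add_eq_mul]
    rfl
  rw [h1]
  simp only [Fintype.sum_prod_type]
  rw [← Finset.sum_mul_sum, AddChar.sum_mulShift _ ψ_prim, AddChar.sum_mulShift _ ψ_prim]
  have ha : a = 0 ↔ a 0 = 0 ∧ a 1 = 0 := by
    constructor
    · intro h; simp [h]
    · rintro ⟨h0, h1⟩; funext i; fin_cases i <;> assumption
  by_cases h0 : a 0 = 0 <;> by_cases h1 : a 1 = 0 <;>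
    simp [h0, h1, ha, sq]

variable (E : Finset (Fin 2 → Fq))

noncomputable def F (w : Fin 2 → Fq) : ℂ := ∑ u ∈ E, ψ Fq (dot w u)

lemma F_neg (w : Fin 2 → Fq) : F E (-w) = (starRingEnd ℂ) (F E w) := by
  rw [F, F, map_sum]
  refine Finset.sum_congr rfl fun u _ => ?_
  rw [ψ_conj]
  congr 1
  simp only [dot, Pi.neg_apply]
  ring

noncomputable def pw (w : Fin 2 → Fq) : ℝ := Complex.normSq (F E w)

lemma pw_nonneg (w : Fin 2 → Fq) : 0 ≤ pw E w := Complex.normSq_nonneg _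

lemma pw_eq (w : Fin 2 → Fq) : (pw E w : ℂ) = F E w * F E (-w) := by
  rw [pw, F_neg, Complex.mul_conj]

lemma F_zero : F E 0 = (E.card : ℂ) := by
  rw [F]
  simp [dot]

lemma pw_zero : pw E 0 = (E.card : ℝ) * (E.card : ℝ) := by
  have : (pw E 0 : ℂ) = ((E.card : ℝ) * (E.card : ℝ) : ℝ) := by
    rw [pw_eq, neg_zero, F_zero]
    push_cast
    ring
  exact_mod_cast this

lemma prod_sum {α β : Type} (s : Finset α) (t : Finset β) (f : α → ℂ) (g : β → ℂ) :
    ∑ a ∈ s ×ˢ t, f a.1 * g a.2 = (∑ u ∈ s, f u) * (∑ u ∈ t, g u) := by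
  rw [Finset.sum_mul_sum, Finset.sum_product]

lemma prod_sum4 {α : Type} (s : Finset α) (f g h k : α → ℂ) :
    ∑ z ∈ (s ×ˢ s) ×ˢ (s ×ˢ s), (f z.1.1 * g z.1.2) * (h z.2.1 * k z.2.2)
      = ((∑ u ∈ s, f u) * (∑ u ∈ s, g u)) * ((∑ u ∈ s, h u) * (∑ u ∈ s, k u)) := by
  calc ∑ z ∈ (s ×ˢ s) ×ˢ (s ×ˢ s), (f z.1.1 * g z.1.2) * (h z.2.1 * k z.2.2)
      = (∑ a ∈ s ×ˢ s, f a.1 * g a.2) * (∑ b ∈ s ×ˢ s, h b.1 * k b.2) :=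
        prod_sum (s ×ˢ s) (s ×ˢ s) (fun a => f a.1 * g a.2) (fun b => h b.1 * k b.2)
    _ = _ := by rw [prod_sum, prod_sum]

lemma parseval_c : ∑ m : Fin 2 → Fq, (pw E m : ℂ)
    = (Fintype.card Fq : ℂ) ^ 2 * (E.card : ℂ) := by
  have h : ∀ m : Fin 2 → Fq, (pw E m : ℂ) = ∑ u ∈ E, ∑ v ∈ E, ψ Fq (dot m (u - v)) := by
    intro m
    rw [pw_eq, F, F, Finset.sum_mul_sum]
    refine Finset.sum_congr rfl fun u _ => Finset.sum_congr rfl fun v _ => ?_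
    rw [← AddChar.map_add_eq_mul]
    congr 1
    simp only [dot, Pi.neg_apply, Pi.sub_apply]
    ring
  simp_rw [h]
  rw [Finset.sum_comm]
  have h2 : ∀ u ∈ E, ∑ m : Fin 2 → Fq, ∑ v ∈ E, ψ Fq (dot m (u - v))
      = (Fintype.card Fq : ℂ) ^ 2 := by
    intro u hu
    rw [Finset.sum_comm]
    have h3 : ∀ v ∈ E, ∑ m : Fin 2 → Fq, ψ Fq (dot m (u - v))
        = if u = v then ((Fintype.card Fq : ℂ)) ^ 2 else 0 := by
      intro v _
      rw [orth]
      simp [sub_eq_zero]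
    rw [Finset.sum_congr rfl h3, Finset.sum_ite_eq E u (fun _ => ((Fintype.card Fq : ℂ)) ^ 2),
      if_pos hu]
  rw [Finset.sum_congr rfl h2, Finset.sum_const, nsmul_eq_mul, mul_comm]

lemma main_id (lam : Fq) :
    (Fintype.card Fq : ℂ) ^ 2 * ((((E ×ˢ E) ×ˢ (E ×ˢ E)).filter
        (fun z : ((Fin 2 → Fq) × (Fin 2 → Fq)) × ((Fin 2 → Fq) × (Fin 2 → Fq)) =>
          z.1.1 - z.1.2 = lam • (z.2.1 - z.2.2))).card : ℂ)
      = ∑ m : Fin 2 → Fq, (pw E m : ℂ) * (pw E (lam • m) : ℂ) := by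
  have hL : ∑ z ∈ (E ×ˢ E) ×ˢ (E ×ˢ E),
      (if z.1.1 - z.1.2 = lam • (z.2.1 - z.2.2) then (Fintype.card Fq : ℂ) ^ 2 else 0)
      = (Fintype.card Fq : ℂ) ^ 2 * ((((E ×ˢ E) ×ˢ (E ×ˢ E)).filter
        (fun z : ((Fin 2 → Fq) × (Fin 2 → Fq)) × ((Fin 2 → Fq) × (Fin 2 → Fq)) =>
          z.1.1 - z.1.2 = lam • (z.2.1 - z.2.2))).card : ℂ) := by
    rw [← Finset.sum_filter, Finset.sum_const, nsmul_eq_mul, mul_comm]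
  rw [← hL]
  have hterm : ∀ z : ((Fin 2 → Fq) × (Fin 2 → Fq)) × ((Fin 2 → Fq) × (Fin 2 → Fq)),
      (if z.1.1 - z.1.2 = lam • (z.2.1 - z.2.2) then (Fintype.card Fq : ℂ) ^ 2 else 0)
      = ∑ m : Fin 2 → Fq, ψ Fq (dot m (z.1.1 - z.1.2 - lam • (z.2.1 - z.2.2))) := by
    intro z
    rw [orth]
    simp [sub_eq_zero]
  rw [Finset.sum_congr rfl (fun z _ => hterm z), Finset.sum_comm]
  refine Finset.sum_congr rfl fun m _ => ?_
  have hkey : ∀ z : ((Fin 2 → Fq) × (Fin 2 → Fq)) × ((Fin 2 → Fq) × (Fin 2 → Fq)),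
      ψ Fq (dot m (z.1.1 - z.1.2 - lam • (z.2.1 - z.2.2)))
      = (ψ Fq (dot m z.1.1) * ψ Fq (dot (-m) z.1.2)) *
        (ψ Fq (dot (-(lam • m)) z.2.1) * ψ Fq (dot (lam • m) z.2.2)) := by
    intro z
    rw [← AddChar.map_add_eq_mul, ← AddChar.map_add_eq_mul, ← AddChar.map_add_eq_mul]
    congr 1
    simp only [dot, Pi.neg_apply, Pi.sub_apply, Pi.smul_apply, smul_eq_mul]
    ring
  rw [Finset.sum_congr rfl (fun z _ => hkey z)]
  have h4 : ∑ z ∈ (E ×ˢ E) ×ˢ (E ×ˢ E),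
      (ψ Fq (dot m z.1.1) * ψ Fq (dot (-m) z.1.2)) *
        (ψ Fq (dot (-(lam • m)) z.2.1) * ψ Fq (dot (lam • m) z.2.2))
      = (F E m * F E (-m)) * (F E (-(lam • m)) * F E (lam • m)) :=
    prod_sum4 E (fun u => ψ Fq (dot m u)) (fun u => ψ Fq (dot (-m) u))
      (fun u => ψ Fq (dot (-(lam • m)) u)) (fun u => ψ Fq (dot (lam • m) u))
  rw [h4, pw_eq, pw_eq]
  ring


lemma main_id_r (lam : Fq) :
    (Fintype.card Fq : ℝ) ^ 2 * ((((E ×ˢ E) ×ˢ (E ×ˢ E)).filter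
        (fun z : ((Fin 2 → Fq) × (Fin 2 → Fq)) × ((Fin 2 → Fq) × (Fin 2 → Fq)) =>
          z.1.1 - z.1.2 = lam • (z.2.1 - z.2.2))).card : ℝ)
      = ∑ m : Fin 2 → Fq, pw E m * pw E (lam • m) := by
  have h := main_id E lam
  have h2 : (((Fintype.card Fq : ℝ) ^ 2 * ((((E ×ˢ E) ×ˢ (E ×ˢ E)).filter
        (fun z : ((Fin 2 → Fq) × (Fin 2 → Fq)) × ((Fin 2 → Fq) × (Fin 2 → Fq)) =>
          z.1.1 - z.1.2 = lam • (z.2.1 - z.2.2))).card : ℝ) : ℝ) : ℂ)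
      = ((∑ m : Fin 2 → Fq, pw E m * pw E (lam • m) : ℝ) : ℂ) := by
    push_cast
    push_cast at h
    exact h
  exact_mod_cast h2

lemma parseval_r : ∑ m : Fin 2 → Fq, pw E m
    = (Fintype.card Fq : ℝ) ^ 2 * (E.card : ℝ) := by
  have h := parseval_c E
  have h2 : ((∑ m : Fin 2 → Fq, pw E m : ℝ) : ℂ)
      = (((Fintype.card Fq : ℝ) ^ 2 * (E.card : ℝ) : ℝ) : ℂ) := by
    push_cast
    push_cast at h
    exact h
  exact_mod_cast h2

lemma smul_cancel {d : Fin 2 → Fq} (hd : d ≠ 0) {a b : Fq} (h : a • d = b • d) : a = b := by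
  by_contra hne
  have h0 : (a - b) • d = 0 := by rw [sub_smul, h, sub_self]
  rcases smul_eq_zero.mp h0 with h' | h'
  · exact hne (sub_eq_zero.mp h')
  · exact hd h'

lemma Ncard_eq {lam : Fq} (hlam : lam ≠ 0) :
    (((E ×ˢ E) ×ˢ (E ×ˢ E)).filter
      (fun z : ((Fin 2 → Fq) × (Fin 2 → Fq)) × ((Fin 2 → Fq) × (Fin 2 → Fq)) =>
        z.1.1 - z.1.2 = lam • (z.2.1 - z.2.2))).card
      = (((E ×ˢ E) ×ˢ (E ×ˢ E)).filter
      (fun z : ((Fin 2 → Fq) × (Fin 2 → Fq)) × ((Fin 2 → Fq) × (Fin 2 → Fq)) =>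
        z.1.1 ≠ z.1.2 ∧ z.2.1 ≠ z.2.2 ∧ z.1.1 - z.1.2 = lam • (z.2.1 - z.2.2))).card
        + E.card * E.card := by
  classical
  set s := (E ×ˢ E) ×ˢ (E ×ˢ E)
  have hunion : s.filter (fun z : ((Fin 2 → Fq) × (Fin 2 → Fq)) × ((Fin 2 → Fq) × (Fin 2 → Fq)) =>
        z.1.1 - z.1.2 = lam • (z.2.1 - z.2.2))
      = s.filter (fun z => z.1.1 ≠ z.1.2 ∧ z.2.1 ≠ z.2.2 ∧ z.1.1 - z.1.2 = lam • (z.2.1 - z.2.2))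
        ∪ s.filter (fun z => z.1.1 = z.1.2 ∧ z.2.1 = z.2.2) := by
    ext z
    simp only [Finset.mem_union, Finset.mem_filter]
    constructor
    · rintro ⟨hz, hc⟩
      by_cases hx : z.2.1 = z.2.2
      · right
        refine ⟨hz, ?_, hx⟩
        have h0 : z.1.1 - z.1.2 = 0 := by rw [hc, hx]; simp
        exact sub_eq_zero.mp h0
      · left
        refine ⟨hz, ?_, hx, hc⟩
        intro h
        apply hx
        have h0 : lam • (z.2.1 - z.2.2) = 0 := by rw [← hc, h, sub_self]
        rcases smul_eq_zero.mp h0 with h' | h'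
        · exact absurd h' hlam
        · exact sub_eq_zero.mp h'
    · rintro (⟨hz, _, _, hc⟩ | ⟨hz, h1, h2⟩)
      · exact ⟨hz, hc⟩
      · refine ⟨hz, ?_⟩
        rw [h1, h2]
        simp
  have hdisj : Disjoint
      (s.filter (fun z : ((Fin 2 → Fq) × (Fin 2 → Fq)) × ((Fin 2 → Fq) × (Fin 2 → Fq)) =>
        z.1.1 ≠ z.1.2 ∧ z.2.1 ≠ z.2.2 ∧ z.1.1 - z.1.2 = lam • (z.2.1 - z.2.2)))
      (s.filter (fun z => z.1.1 = z.1.2 ∧ z.2.1 = z.2.2)) := by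
    rw [Finset.disjoint_left]
    intro z hz1 hz2
    rw [Finset.mem_filter] at hz1 hz2
    exact hz1.2.1 hz2.2.1
  rw [hunion, Finset.card_union_of_disjoint hdisj]
  congr 1
  have hD : s.filter (fun z : ((Fin 2 → Fq) × (Fin 2 → Fq)) × ((Fin 2 → Fq) × (Fin 2 → Fq)) =>
      z.1.1 = z.1.2 ∧ z.2.1 = z.2.2)
      = ((E ×ˢ E).filter (fun a : (Fin 2 → Fq) × (Fin 2 → Fq) => a.1 = a.2)) ×ˢ
        ((E ×ˢ E).filter (fun a : (Fin 2 → Fq) × (Fin 2 → Fq) => a.1 = a.2)) := by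
    ext z
    simp only [Finset.mem_filter, Finset.mem_product, s]
    tauto
  have hdiag : ((E ×ˢ E).filter (fun a : (Fin 2 → Fq) × (Fin 2 → Fq) => a.1 = a.2)) = E.diag := by
    ext a
    simp only [Finset.mem_filter, Finset.mem_product, Finset.mem_diag]
    constructor
    · rintro ⟨⟨h1, _⟩, h3⟩; exact ⟨h1, h3⟩
    · rintro ⟨h1, h3⟩; exact ⟨⟨h1, h3 ▸ h1⟩, h3⟩
  rw [hD, hdiag, Finset.card_product, Finset.diag_card]

lemma big_card :
    (((E ×ˢ E) ×ˢ (E ×ˢ E)).filter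
      (fun z : ((Fin 2 → Fq) × (Fin 2 → Fq)) × ((Fin 2 → Fq) × (Fin 2 → Fq)) =>
        z.1.1 ≠ z.1.2 ∧ z.2.1 ≠ z.2.2 ∧
          ∃ lam : Fq, lam ≠ 0 ∧ z.1.1 - z.1.2 = lam • (z.2.1 - z.2.2))).card
    = ∑ lam ∈ Finset.univ.filter (fun lam : Fq => lam ≠ 0),
        (((E ×ˢ E) ×ˢ (E ×ˢ E)).filter
          (fun z : ((Fin 2 → Fq) × (Fin 2 → Fq)) × ((Fin 2 → Fq) × (Fin 2 → Fq)) =>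
            z.1.1 ≠ z.1.2 ∧ z.2.1 ≠ z.2.2 ∧ z.1.1 - z.1.2 = lam • (z.2.1 - z.2.2))).card := by
  classical
  have hbig : ((E ×ˢ E) ×ˢ (E ×ˢ E)).filter
      (fun z : ((Fin 2 → Fq) × (Fin 2 → Fq)) × ((Fin 2 → Fq) × (Fin 2 → Fq)) =>
        z.1.1 ≠ z.1.2 ∧ z.2.1 ≠ z.2.2 ∧
          ∃ lam : Fq, lam ≠ 0 ∧ z.1.1 - z.1.2 = lam • (z.2.1 - z.2.2))
      = (Finset.univ.filter (fun lam : Fq => lam ≠ 0)).biUnion (fun lam =>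
          ((E ×ˢ E) ×ˢ (E ×ˢ E)).filter
          (fun z : ((Fin 2 → Fq) × (Fin 2 → Fq)) × ((Fin 2 → Fq) × (Fin 2 → Fq)) =>
            z.1.1 ≠ z.1.2 ∧ z.2.1 ≠ z.2.2 ∧ z.1.1 - z.1.2 = lam • (z.2.1 - z.2.2))) := by
    ext z
    simp only [Finset.mem_biUnion, Finset.mem_filter, Finset.mem_univ, true_and]
    constructor
    · rintro ⟨hz, h1, h2, lam, hl, hc⟩
      exact ⟨lam, hl, hz, h1, h2, hc⟩
    · rintro ⟨lam, hl, hz, h1, h2, hc⟩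
      exact ⟨hz, h1, h2, lam, hl, hc⟩
  rw [hbig, Finset.card_biUnion]
  intro a _ b _ hab
  rw [Function.onFun, Finset.disjoint_left]
  intro z hza hzb
  rw [Finset.mem_filter] at hza hzb
  obtain ⟨_, _, hx, hca⟩ := hza
  obtain ⟨_, _, _, hcb⟩ := hzb
  apply hab
  exact smul_cancel (sub_ne_zero.mpr hx) (hca ▸ hcb ▸ rfl : a • (z.2.1 - z.2.2) = b • (z.2.1 - z.2.2))

end Stmt7Aux


set_option maxHeartbeats 1000000 in
theorem stmt_7 :
    ∃ C : ℝ, 0 < C ∧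
      ∀ (Fq : Type) [Field Fq] [Fintype Fq], ∀ (E : Finset (Fin 2 → Fq)),
        |((((E ×ˢ E) ×ˢ (E ×ˢ E)).filter
            (fun p : ((Fin 2 → Fq) × (Fin 2 → Fq)) × ((Fin 2 → Fq) × (Fin 2 → Fq)) =>
              p.1.1 ≠ p.1.2 ∧ p.2.1 ≠ p.2.2 ∧
              ∃ lam : Fq, lam ≠ 0 ∧ p.1.1 - p.1.2 = lam • (p.2.1 - p.2.2))).card : ℝ) -
          (E.card : ℝ) ^ 4 / (Fintype.card Fq : ℝ)| ≤
        C * (Fintype.card Fq : ℝ) ^ 2 * (E.card : ℝ) ^ 2 := by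
  refine ⟨3, by norm_num, ?_⟩
  intro Fq _ _ E
  classical
  set Q : ℝ := (Fintype.card Fq : ℝ) with hQdef
  set e : ℝ := (E.card : ℝ) with hedef
  set c : ℝ := ((((E ×ˢ E) ×ˢ (E ×ˢ E)).filter
            (fun p : ((Fin 2 → Fq) × (Fin 2 → Fq)) × ((Fin 2 → Fq) × (Fin 2 → Fq)) =>
              p.1.1 ≠ p.1.2 ∧ p.2.1 ≠ p.2.2 ∧
              ∃ lam : Fq, lam ≠ 0 ∧ p.1.1 - p.1.2 = lam • (p.2.1 - p.2.2))).card : ℝ) with hcdef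
  set s : Finset Fq := Finset.univ.filter (fun lam : Fq => lam ≠ 0) with hs
  set R' : ℝ := ∑ lam ∈ s, ∑ m ∈ (Finset.univ : Finset (Fin 2 → Fq)).erase 0,
      Stmt7Aux.pw E m * Stmt7Aux.pw E (lam • m) with hR'
  have hq2 : 1 < Fintype.card Fq := Fintype.one_lt_card
  have hQgt : (1:ℝ) < Q := by rw [hQdef]; exact_mod_cast hq2
  have hQ0 : (0:ℝ) < Q := lt_trans one_pos hQgt
  have he0 : (0:ℝ) ≤ e := by rw [hedef]; positivity
  have heQ : e ≤ Q^2 := by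
    rw [hedef, hQdef]
    have hE : E.card ≤ Fintype.card Fq ^ 2 := by
      calc E.card ≤ Fintype.card (Fin 2 → Fq) := Finset.card_le_univ E
      _ = Fintype.card Fq ^ 2 := by simp [Fintype.card_fun]
    exact_mod_cast hE
  have hPar := Stmt7Aux.parseval_r E
  have hsplit : ∀ lam : Fq, (∑ m : Fin 2 → Fq, Stmt7Aux.pw E m * Stmt7Aux.pw E (lam • m))
      = Stmt7Aux.pw E 0 * Stmt7Aux.pw E 0
        + ∑ m ∈ (Finset.univ : Finset (Fin 2 → Fq)).erase 0,
            Stmt7Aux.pw E m * Stmt7Aux.pw E (lam • m) := by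
    intro lam
    rw [← Finset.add_sum_erase (Finset.univ)
      (fun m => Stmt7Aux.pw E m * Stmt7Aux.pw E (lam • m)) (Finset.mem_univ (0 : Fin 2 → Fq))]
    rw [smul_zero]
  have hsum1 : ∑ lam ∈ s, (Q ^ 2 * (((((E ×ˢ E) ×ˢ (E ×ˢ E)).filter
      (fun z : ((Fin 2 → Fq) × (Fin 2 → Fq)) × ((Fin 2 → Fq) × (Fin 2 → Fq)) =>
        z.1.1 - z.1.2 = lam • (z.2.1 - z.2.2))).card : ℝ)))
      = (s.card : ℝ) * (Stmt7Aux.pw E 0 * Stmt7Aux.pw E 0) + R' := by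
    rw [Finset.sum_congr rfl (fun lam _ => by
      rw [hQdef, Stmt7Aux.main_id_r E lam, hsplit lam])]
    rw [Finset.sum_add_distrib, Finset.sum_const, nsmul_eq_mul, hR']
  have hsum2 : ∑ lam ∈ s, (Q ^ 2 * (((((E ×ˢ E) ×ˢ (E ×ˢ E)).filter
      (fun z : ((Fin 2 → Fq) × (Fin 2 → Fq)) × ((Fin 2 → Fq) × (Fin 2 → Fq)) =>
        z.1.1 - z.1.2 = lam • (z.2.1 - z.2.2))).card : ℝ)))
      = Q ^ 2 * (c + (s.card : ℝ) * (e * e)) := by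
    rw [← Finset.mul_sum]
    congr 1
    have hterm : ∀ lam ∈ s, (((((E ×ˢ E) ×ˢ (E ×ˢ E)).filter
        (fun z : ((Fin 2 → Fq) × (Fin 2 → Fq)) × ((Fin 2 → Fq) × (Fin 2 → Fq)) =>
          z.1.1 - z.1.2 = lam • (z.2.1 - z.2.2))).card : ℝ))
        = ((((E ×ˢ E) ×ˢ (E ×ˢ E)).filter
        (fun z : ((Fin 2 → Fq) × (Fin 2 → Fq)) × ((Fin 2 → Fq) × (Fin 2 → Fq)) =>
          z.1.1 ≠ z.1.2 ∧ z.2.1 ≠ z.2.2 ∧ z.1.1 - z.1.2 = lam • (z.2.1 - z.2.2))).card : ℝ)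
          + e * e := by
      intro lam hl
      rw [hs, Finset.mem_filter] at hl
      have := Stmt7Aux.Ncard_eq E hl.2
      rw [hedef]
      exact_mod_cast congrArg (fun n : ℕ => (n : ℝ)) this
    rw [Finset.sum_congr rfl hterm, Finset.sum_add_distrib, Finset.sum_const, nsmul_eq_mul]
    congr 1
    rw [hcdef]
    rw [Stmt7Aux.big_card E]
    push_cast
    rfl
  have hpw0 := Stmt7Aux.pw_zero E
  have heq : Q ^ 2 * (c + (s.card : ℝ) * (e * e))
      = (s.card : ℝ) * ((e * e) * (e * e)) + R' := by
    rw [← hsum2, hsum1, hpw0, ← hedef]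
  have hscast : (s.card : ℝ) = Q - 1 := by
    rw [hs, Finset.filter_ne', Finset.card_erase_of_mem (Finset.mem_univ (0:Fq)),
      Finset.card_univ, Nat.cast_sub (by omega : 1 ≤ Fintype.card Fq), hQdef]
    simp
  rw [hscast] at heq
  clear_value Q e c s R'
  -- bounds on R'
  have hR0 : (0:ℝ) ≤ R' := by
    rw [hR']
    refine Finset.sum_nonneg fun lam _ => Finset.sum_nonneg fun m _ => ?_
    exact mul_nonneg (Stmt7Aux.pw_nonneg E m) (Stmt7Aux.pw_nonneg E _)
  have hInner : ∀ m ∈ (Finset.univ : Finset (Fin 2 → Fq)).erase 0,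
      ∑ lam ∈ s, Stmt7Aux.pw E (lam • m) ≤ Q ^ 2 * e := by
    intro m hm
    have hm0 : m ≠ 0 := Finset.ne_of_mem_erase hm
    have himg : ∑ lam ∈ s, Stmt7Aux.pw E (lam • m)
        = ∑ w ∈ s.image (fun lam => lam • m), Stmt7Aux.pw E w :=
      (Finset.sum_image (fun a _ b _ h => Stmt7Aux.smul_cancel hm0 h)).symm
    rw [himg, hQdef, hedef, ← hPar]
    exact Finset.sum_le_sum_of_subset_of_nonneg (Finset.subset_univ _)
      (fun w _ _ => Stmt7Aux.pw_nonneg E w)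
  have hR1 : R' ≤ (Q ^ 2 * e) * (Q ^ 2 * e) := by
    rw [hR', Finset.sum_comm]
    have step1 : ∀ m ∈ (Finset.univ : Finset (Fin 2 → Fq)).erase 0,
        ∑ lam ∈ s, Stmt7Aux.pw E m * Stmt7Aux.pw E (lam • m)
          ≤ Stmt7Aux.pw E m * (Q ^ 2 * e) := by
      intro m hm
      rw [← Finset.mul_sum]
      exact mul_le_mul_of_nonneg_left (hInner m hm) (Stmt7Aux.pw_nonneg E m)
    calc ∑ m ∈ (Finset.univ : Finset (Fin 2 → Fq)).erase 0,
          ∑ lam ∈ s, Stmt7Aux.pw E m * Stmt7Aux.pw E (lam • m)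
        ≤ ∑ m ∈ (Finset.univ : Finset (Fin 2 → Fq)).erase 0,
            Stmt7Aux.pw E m * (Q ^ 2 * e) := Finset.sum_le_sum step1
      _ = (∑ m ∈ (Finset.univ : Finset (Fin 2 → Fq)).erase 0, Stmt7Aux.pw E m) * (Q ^ 2 * e) :=
          (Finset.sum_mul _ _ _).symm
      _ ≤ (∑ m : Fin 2 → Fq, Stmt7Aux.pw E m) * (Q ^ 2 * e) := by
          refine mul_le_mul_of_nonneg_right ?_ (by positivity)
          exact Finset.sum_le_sum_of_subset_of_nonneg (Finset.subset_univ _)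
            (fun w _ _ => Stmt7Aux.pw_nonneg E w)
      _ = (Q ^ 2 * e) * (Q ^ 2 * e) := by rw [hPar, ← hQdef, ← hedef]
  -- final arithmetic
  have hQne : Q ≠ 0 := ne_of_gt hQ0
  have h4 : c - e ^ 4 / Q = (R' - e ^ 4 - Q ^ 2 * (Q - 1) * (e * e)) / Q ^ 2 := by
    rw [eq_div_iff (by positivity : (Q:ℝ) ^ 2 ≠ 0)]
    field_simp
    linear_combination heq
  rw [h4, abs_div, abs_of_nonneg (by positivity : (0:ℝ) ≤ Q ^ 2),
    div_le_iff₀ (by positivity : (0:ℝ) < Q ^ 2)]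
  have h1 : e ^ 2 ≤ Q ^ 4 := by
    nlinarith [mul_le_mul heQ heQ he0 (by positivity : (0:ℝ) ≤ Q ^ 2)]
  have hA : e ^ 4 ≤ Q ^ 4 * e ^ 2 := by nlinarith [h1, sq_nonneg e]
  have hq3 : (0:ℝ) ≤ Q ^ 3 * (Q - 1) := mul_nonneg (by positivity) (by linarith)
  have hq4 : Q ^ 2 * (Q - 1) ≤ Q ^ 4 := by nlinarith [hq3, sq_nonneg Q]
  have hB : Q ^ 2 * (Q - 1) * (e * e) ≤ Q ^ 4 * e ^ 2 := by
    nlinarith [hq4, mul_nonneg he0 he0, sq_nonneg e]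
  have hB0 : (0:ℝ) ≤ Q ^ 2 * (Q - 1) * (e * e) :=
    mul_nonneg (mul_nonneg (sq_nonneg Q) (by linarith)) (mul_nonneg he0 he0)
  have he4 : (0:ℝ) ≤ e ^ 4 := by positivity
  have hR1' : R' ≤ Q ^ 4 * e ^ 2 := by
    have hrw : (Q ^ 2 * e) * (Q ^ 2 * e) = Q ^ 4 * e ^ 2 := by ring
    linarith [hR1]
  have h3 : 3 * Q ^ 2 * e ^ 2 * Q ^ 2 = 3 * (Q ^ 4 * e ^ 2) := by ring
  have hQ4e2 : (0:ℝ) ≤ Q ^ 4 * e ^ 2 := by positivity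
  rw [abs_le]
  constructor
  · linarith
  · linarith
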